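/- Let X be an n × p real matrix and W a p × K real matrix such that W'W is invertible and col(W) ⊆ row(X). Then the row space of the matrix J := X W (W'W)^{-1} W' equals col(W). In particular, if X_1,…,X_G are matrices with p columns and col(W) = ∩_{g=1}^G row(X_g), then the matrices J_g := X_g W (W'W)^{-1} W' all have the same row space, equal to ∩_{g=1}^G row(X_g). -/
import Mathlib


open Matrix

/-- The row space of a matrix: the span of its rows in `ℝ^p`. -/
def rowSpace {m k : ℕ} (M : Matrix (Fin m) (Fin k) ℝ) : Submodule ℝ (Fin k → ℝ) :=
  Submodule.span ℝ (Set.range M)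

/-- The column space of a matrix: the span of its columns. -/
def colSpace {m k : ℕ} (M : Matrix (Fin m) (Fin k) ℝ) : Submodule ℝ (Fin m → ℝ) :=
  Submodule.span ℝ (Set.range Mᵀ)

lemma rowSpace_eq_range {m k : ℕ} (M : Matrix (Fin m) (Fin k) ℝ) :
    rowSpace M = LinearMap.range M.vecMulLinear :=
  (range_vecMulLinear M).symm

lemma rowSpace_mul_le {m q k : ℕ} (A : Matrix (Fin m) (Fin q) ℝ)
    (B : Matrix (Fin q) (Fin k) ℝ) : rowSpace (A * B) ≤ rowSpace B := by
  rw [rowSpace_eq_range, rowSpace_eq_range]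
  rintro v ⟨c, rfl⟩
  exact ⟨c ᵥ* A, by simp [Matrix.vecMul_vecMul]⟩

lemma key {n p K : ℕ} (X : Matrix (Fin n) (Fin p) ℝ)
    (W : Matrix (Fin p) (Fin K) ℝ)
    (hW : IsUnit (Wᵀ * W))
    (hcol : colSpace W ≤ rowSpace X) :
    rowSpace (X * W * (Wᵀ * W)⁻¹ * Wᵀ) = colSpace W := by
  have hdet : IsUnit (Wᵀ * W).det := (Matrix.isUnit_iff_isUnit_det _).mp hW
  have hproj : Wᵀ * (W * (Wᵀ * W)⁻¹ * Wᵀ) = Wᵀ := by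
    have h1 : Wᵀ * (W * (Wᵀ * W)⁻¹ * Wᵀ) = ((Wᵀ * W) * (Wᵀ * W)⁻¹) * Wᵀ := by
      simp only [Matrix.mul_assoc]
    rw [h1, Matrix.mul_nonsing_inv _ hdet, Matrix.one_mul]
  apply le_antisymm
  · have : X * W * (Wᵀ * W)⁻¹ * Wᵀ = (X * W * (Wᵀ * W)⁻¹) * Wᵀ := by
      rw [Matrix.mul_assoc]
    rw [this]
    exact rowSpace_mul_le _ _
  · -- colSpace W = rowSpace Wᵀ
    have hcs : colSpace W = rowSpace Wᵀ := rfl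
    rw [hcs, rowSpace_eq_range, rowSpace_eq_range]
    rintro v ⟨c, rfl⟩
    -- c ᵥ* Wᵀ = row c of combination; it lies in rowSpace X
    have hv : c ᵥ* Wᵀ ∈ rowSpace X := by
      have : c ᵥ* Wᵀ ∈ rowSpace Wᵀ := by
        rw [rowSpace_eq_range]; exact ⟨c, rfl⟩
      exact hcol (hcs ▸ this)
    rw [rowSpace_eq_range] at hv
    obtain ⟨d, hd⟩ := hv
    refine ⟨d, ?_⟩
    simp only [Matrix.vecMulLinear_apply] at hd ⊢
    calc d ᵥ* (X * W * (Wᵀ * W)⁻¹ * Wᵀ)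
        = (d ᵥ* X) ᵥ* (W * (Wᵀ * W)⁻¹ * Wᵀ) := by
          simp [Matrix.mul_assoc, Matrix.vecMul_vecMul]
      _ = (c ᵥ* Wᵀ) ᵥ* (W * (Wᵀ * W)⁻¹ * Wᵀ) := by rw [hd]
      _ = c ᵥ* (Wᵀ * (W * (Wᵀ * W)⁻¹ * Wᵀ)) := by rw [Matrix.vecMul_vecMul]
      _ = c ᵥ* Wᵀ := by rw [hproj]

theorem stmt5 (n p K : ℕ) (X : Matrix (Fin n) (Fin p) ℝ)
    (W : Matrix (Fin p) (Fin K) ℝ)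
    (hW : IsUnit (Wᵀ * W))
    (hcol : colSpace W ≤ rowSpace X) :
    rowSpace (X * W * (Wᵀ * W)⁻¹ * Wᵀ) = colSpace W ∧
    ∀ (G : ℕ) (m : Fin G → ℕ) (Xs : ∀ g : Fin G, Matrix (Fin (m g)) (Fin p) ℝ),
      colSpace W = (⨅ g, rowSpace (Xs g)) →
      ∀ g, rowSpace (Xs g * W * (Wᵀ * W)⁻¹ * Wᵀ) = ⨅ h, rowSpace (Xs h) := by
  refine ⟨key X W hW hcol, ?_⟩
  intro G m Xs hEq g
  have hg : colSpace W ≤ rowSpace (Xs g) := hEq ▸ iInf_le _ g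
  rw [key (Xs g) W hW hg, hEq]
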